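/- Let l₁, l₂, l₃ ∈ ℝ and define, for q ∈ [−1,1] and p_n, p_t, κ_n, κ_t, c_n, c_t, τ ∈ ℝ, the surface elastic energy density w := l₁[ q²(κ_t² + κ_n²) + (p_n² + p_t²)/4 + ((c_n+c_t)/2 + q(c_n−c_t)/2)² ] + l₂ q (κ_n p_t − κ_t p_n) − l₃ (1−q²)(c_n c_t − τ²) − (l₁ + l₂ − 4l₃) q² τ². Then w ≥ 0 for all q ∈ [−1,1] and all real p_n, p_t, κ_n, κ_t, c_n, c_t, τ if and only if l₁ ≥ 0, |l₂| ≤ l₁, 0 ≤ l₃ ≤ l₁, and l₁ + l₂ ≤ 4l₃. -/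
import Mathlib


/-- Positivity of the two-dimensional surface elastic energy density
`w = l₁[q²(κ_t²+κ_n²) + (p_n²+p_t²)/4 + ((c_n+c_t)/2 + q(c_n−c_t)/2)²]
    + l₂ q (κ_n p_t − κ_t p_n) − l₃(1−q²)(c_n c_t − τ²) − (l₁+l₂−4l₃) q² τ²`
for all admissible arguments holds iff `l₁ ≥ 0`, `|l₂| ≤ l₁`, `0 ≤ l₃ ≤ l₁` and `l₁+l₂ ≤ 4l₃`. -/
theorem surface_elastic_energy_nonneg_iff (l₁ l₂ l₃ : ℝ) :
    (∀ q pn pt κn κt cn ct τ : ℝ, q ∈ Set.Icc (-1 : ℝ) 1 →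
      0 ≤ l₁ * (q ^ 2 * (κt ^ 2 + κn ^ 2) + (pn ^ 2 + pt ^ 2) / 4 +
            ((cn + ct) / 2 + q * (cn - ct) / 2) ^ 2) +
          l₂ * q * (κn * pt - κt * pn) - l₃ * (1 - q ^ 2) * (cn * ct - τ ^ 2) -
          (l₁ + l₂ - 4 * l₃) * q ^ 2 * τ ^ 2) ↔
    (0 ≤ l₁ ∧ |l₂| ≤ l₁ ∧ 0 ≤ l₃ ∧ l₃ ≤ l₁ ∧ l₁ + l₂ ≤ 4 * l₃) := by
  constructor
  · intro h
    have h1 := h 0 2 0 0 0 0 0 0 (by constructor <;> norm_num)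
    have h2 := h 1 0 (-2) 1 0 0 0 0 (by constructor <;> norm_num)
    have h3 := h 1 0 2 1 0 0 0 0 (by constructor <;> norm_num)
    have h4 := h 0 0 0 0 0 1 (-1) 0 (by constructor <;> norm_num)
    have h5 := h 0 0 0 0 0 1 1 0 (by constructor <;> norm_num)
    have h6 := h 1 0 0 0 0 0 0 1 (by constructor <;> norm_num)
    norm_num at h1 h2 h3 h4 h5 h6
    refine ⟨by linarith, abs_le.mpr ⟨by linarith, by linarith⟩, by linarith, by linarith,
      by linarith⟩
  · rintro ⟨hl1, hl2, hl3, hl31, hl4⟩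
    rw [abs_le] at hl2
    intro q pn pt κn κt cn ct τ hq
    obtain ⟨hq1, hq2⟩ := hq
    have hq3 : 0 ≤ 1 - q ^ 2 := by nlinarith
    have hp : 0 ≤ l₁ + l₂ := by linarith
    have hm : 0 ≤ l₁ - l₂ := by linarith
    have h13 : 0 ≤ l₁ - l₃ := by linarith
    have h43 : 0 ≤ 4 * l₃ - l₁ - l₂ := by linarith
    nlinarith [mul_nonneg hp (sq_nonneg (q * κn + pt / 2)),
      mul_nonneg hm (sq_nonneg (q * κn - pt / 2)),
      mul_nonneg hm (sq_nonneg (q * κt + pn / 2)),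
      mul_nonneg hp (sq_nonneg (q * κt - pn / 2)),
      mul_nonneg h13 (sq_nonneg ((1 + q) * cn + (1 - q) * ct)),
      mul_nonneg hl3 (sq_nonneg ((1 + q) * cn - (1 - q) * ct)),
      mul_nonneg (mul_nonneg hl3 hq3) (sq_nonneg τ),
      mul_nonneg (mul_nonneg h43 (sq_nonneg q)) (sq_nonneg τ)]
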